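/- Let W be a closed linear sublattice of ℓᵖ(X, w) containing 1 (X countable, w summable positive weight, 1 ≤ p < ∞), and let ∼ be the relation x ∼ y iff f(x) = f(y) for all f ∈ W. Then W equals the closed linear span of the characteristic functions of the equivalence classes of ∼. -/

import Mathlib

open MeasureTheory Filter

private lemma unifIntegrable_of_le_ae {α : Type*} {m : MeasurableSpace α} {μ : Measure α}
    {p : ENNReal} (hp : 1 ≤ p) (hp' : p ≠ ⊤) {f : ℕ → α → ℝ} {g : α → ℝ}
    (hg : MemLp g p μ) (h : ∀ n, ∀ᵐ x ∂μ, ‖f n x‖ ≤ g x) :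
    UnifIntegrable f p μ := by
  intro ε hε
  obtain ⟨δ, hδ, H⟩ := hg.eLpNorm_indicator_le hp hp' hε
  refine ⟨δ, hδ, fun n s hs hμs => le_trans (eLpNorm_mono_ae ?_) (H s hs hμs)⟩
  filter_upwards [h n] with x hx
  by_cases hxs : x ∈ s
  · simpa [Set.indicator_of_mem hxs] using hx.trans (le_abs_self _)
  · simp [Set.indicator_of_notMem hxs]

private lemma tendsto_Lp_of_dominated {α : Type*} {m : MeasurableSpace α} {μ : Measure α}
    [IsFiniteMeasure μ] {p : ENNReal} [Fact (1 ≤ p)] (hp' : p ≠ ⊤)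
    {u : ℕ → Lp ℝ p μ} {v : Lp ℝ p μ} {g : α → ℝ}
    (hg : MemLp g p μ)
    (hb : ∀ n, ∀ᵐ x ∂μ, ‖u n x‖ ≤ g x)
    (hconv : ∀ᵐ x ∂μ, Tendsto (fun n => u n x) atTop (nhds (v x))) :
    Tendsto u atTop (nhds v) := by
  have hp1 : (1 : ENNReal) ≤ p := Fact.out
  have h := tendsto_Lp_finite_of_tendsto_ae hp1 hp'
    (fun n => Lp.aestronglyMeasurable (u n)) (Lp.memLp v)
    (unifIntegrable_of_le_ae hp1 hp' hg hb) hconv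
  rw [tendsto_iff_norm_sub_tendsto_zero]
  have heq : ∀ n, ‖u n - v‖ = (eLpNorm (⇑(u n) - ⇑v) p μ).toReal := by
    intro n
    rw [Lp.norm_def]
    exact congrArg ENNReal.toReal (eLpNorm_congr_ae (Lp.coeFn_sub _ _))
  simp_rw [heq]
  simpa [Function.comp_def] using (ENNReal.tendsto_toReal ENNReal.zero_ne_top).comp h

private lemma Lp_coeFn_finset_sum {α : Type*} {m : MeasurableSpace α} {μ : Measure α}
    {p : ENNReal} {ι : Type*} (s : Finset ι) (g : ι → Lp ℝ p μ) :
    ⇑(∑ i ∈ s, g i) =ᵐ[μ] fun x => ∑ i ∈ s, g i x := by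
  classical
  induction s using Finset.induction_on with
  | empty => simp only [Finset.sum_empty]; exact Lp.coeFn_zero ℝ p μ
  | insert a s hnot ih =>
    filter_upwards [Lp.coeFn_add (g a) (∑ i ∈ s, g i), ih] with x h1 h2
    rw [Finset.sum_insert hnot, h1, Pi.add_apply, h2, Finset.sum_insert hnot]

/-- Proposition 8 (second part): `W` is the closed linear span of the
characteristic functions of the equivalence classes of `x ∼ y ↔ ∀ f ∈ W, f x = f y`. -/
theorem W_eq_closed_span_of_indicators
    {X : Type*} [Countable X] [MeasurableSpace X] [MeasurableSingletonClass X]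
    (w : X → ℝ) (hw : ∀ x, 0 < w x) (hsum : Summable w)
    (μ : Measure X) (hμ : ∀ x, μ {x} = ENNReal.ofReal (w x))
    (p : ENNReal) [Fact (1 ≤ p)] (hp : p ≠ ⊤)
    (W : Submodule ℝ (Lp ℝ p μ)) (hclosed : IsClosed (W : Set (Lp ℝ p μ)))
    (hlat : ∀ f ∈ W, ∀ g ∈ W, f ⊔ g ∈ W ∧ f ⊓ g ∈ W)
    (one : Lp ℝ p μ) (hone : ∀ᵐ x ∂μ, one x = 1) (hone' : one ∈ W) :
    (W : Set (Lp ℝ p μ)) = closure (Submodule.span ℝ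
      {χ : Lp ℝ p μ | ∃ a : X,
        ⇑χ =ᵐ[μ] Set.indicator {x | ∀ f ∈ W, f x = f a} (fun _ => (1 : ℝ))}) := by
  classical
  -- notation
  set Ea : X → Set X := fun a => {x | ∀ f ∈ W, f x = f a} with hEadef
  set genset : Set (Lp ℝ p μ) :=
    {χ : Lp ℝ p μ | ∃ a : X, ⇑χ =ᵐ[μ] Set.indicator (Ea a) (fun _ => (1 : ℝ))} with hgenset
  -- basic measure facts
  have hwpos : ∀ x : X, (0 : ENNReal) < μ {x} := fun x => by
    rw [hμ x]; exact ENNReal.ofReal_pos.mpr (hw x)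
  have aeAll : ∀ {P : X → Prop}, (∀ᵐ x ∂μ, P x) → ∀ x, P x := by
    intro P h x
    by_contra hx
    rw [ae_iff] at h
    have hle : μ {x} ≤ μ {y | ¬ P y} := measure_mono (Set.singleton_subset_iff.mpr hx)
    rw [h] at hle
    exact absurd (le_antisymm hle zero_le) (hwpos x).ne'
  have hmeasS : ∀ s : Set X, MeasurableSet s := fun s => s.to_countable.measurableSet
  haveI hfin : IsFiniteMeasure μ := by
    constructor
    calc μ Set.univ = μ (⋃ x : X, {x}) := by rw [Set.iUnion_of_singleton]
      _ ≤ ∑' x, μ {x} := measure_iUnion_le _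
      _ = ∑' x, ENNReal.ofReal (w x) := by simp [hμ]
      _ = ENNReal.ofReal (∑' x, w x) :=
          (ENNReal.ofReal_tsum_of_nonneg (fun x => (hw x).le) hsum).symm
      _ < ⊤ := ENNReal.ofReal_lt_top
  have honeAll : ∀ x, one x = 1 := aeAll hone
  -- equivalence class facts
  have hEa_self : ∀ a, a ∈ Ea a := fun a f hf => rfl
  have hEa_eq : ∀ {a x}, x ∈ Ea a → Ea x = Ea a := by
    intro a x hx
    ext y
    constructor
    · intro hy f hf; rw [hy f hf, hx f hf]
    · intro hy f hf; rw [hy f hf, ← hx f hf]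
  -- pointwise lattice operations
  have hsupAll : ∀ u v : Lp ℝ p μ, ∀ x, (u ⊔ v) x = max (u x) (v x) :=
    fun u v => aeAll ((Lp.coeFn_sup u v).mono fun x hx => by
      rw [hx, Pi.sup_apply])
  have hinfAll : ∀ u v : Lp ℝ p μ, ∀ x, (u ⊓ v) x = min (u x) (v x) :=
    fun u v => aeAll ((Lp.coeFn_inf u v).mono fun x hx => by
      rw [hx, Pi.inf_apply])
  -- STEP A : each indicator of an equivalence class belongs to W
  have indicator_mem : ∀ (a : X) (χ : Lp ℝ p μ),
      ⇑χ =ᵐ[μ] Set.indicator (Ea a) (fun _ => (1 : ℝ)) → χ ∈ W := by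
    intro a χ hχ
    have gsel : ∀ y : X, ∃ g : Lp ℝ p μ, g ∈ W ∧ (∀ x, 0 ≤ g x ∧ g x ≤ 1) ∧
        (∀ x ∈ Ea a, g x = 1) ∧ (y ∉ Ea a → g y = 0) := by
      intro y
      by_cases hy : y ∈ Ea a
      · exact ⟨one, hone', fun x => by rw [honeAll x]; norm_num,
          fun x _ => honeAll x, fun h => absurd hy h⟩
      · have hy' : ∃ f ∈ W, ¬ (⇑f y = ⇑f a) := by
          by_contra hcon
          push_neg at hcon
          exact hy hcon
        obtain ⟨f, hfW, hfy⟩ := hy'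
        set t : ℝ := |f y - f a| with ht
        have htpos : 0 < t := abs_pos.mpr (sub_ne_zero.mpr hfy)
        set h0 : Lp ℝ p μ := f - (f a) • one with hh0
        have hh0W : h0 ∈ W := W.sub_mem hfW (W.smul_mem _ hone')
        set habs : Lp ℝ p μ := h0 ⊔ (-h0) with hhabs
        have habsW : habs ∈ W := (hlat h0 hh0W (-h0) (W.neg_mem hh0W)).1
        set u : Lp ℝ p μ := one - t⁻¹ • habs with hu
        have huW : u ∈ W := W.sub_mem hone' (W.smul_mem _ habsW)
        have hgW : u ⊔ 0 ∈ W := (hlat u huW 0 W.zero_mem).1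
        have hh0val : ∀ x, h0 x = f x - f a := by
          apply aeAll
          filter_upwards [Lp.coeFn_sub f ((f a : ℝ) • one), Lp.coeFn_smul (f a : ℝ) one, hone]
            with x e1 e2 e3
          rw [hh0, e1, Pi.sub_apply, e2, Pi.smul_apply, smul_eq_mul, e3, mul_one]
        have habsval : ∀ x, habs x = |f x - f a| := by
          intro x
          have h2 : (-h0) x = -(h0 x) := by
            have := aeAll (Lp.coeFn_neg h0) x
            simpa using this
          rw [hhabs, hsupAll h0 (-h0) x, h2, hh0val x, ← abs_eq_max_neg]
        have hgval : ∀ x, (u ⊔ 0) x = max (1 - t⁻¹ * |f x - f a|) 0 := by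
          intro x
          have h1 : (u ⊔ 0) x = max (u x) ((0 : Lp ℝ p μ) x) := hsupAll u 0 x
          have h2 : (0 : Lp ℝ p μ) x = 0 := aeAll (Lp.coeFn_zero ℝ p μ) x
          have h3 : u x = 1 - t⁻¹ * |f x - f a| := by
            have e1 := aeAll (Lp.coeFn_sub one (t⁻¹ • habs)) x
            have e2 := aeAll (Lp.coeFn_smul (t⁻¹ : ℝ) habs) x
            rw [hu, e1, Pi.sub_apply, honeAll x, e2, Pi.smul_apply, smul_eq_mul, habsval x]
          rw [h1, h2, h3]
        refine ⟨u ⊔ 0, hgW, ?_, ?_, ?_⟩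
        · intro x
          rw [hgval x]
          constructor
          · exact le_max_right _ _
          · refine max_le ?_ zero_le_one
            have : 0 ≤ t⁻¹ * |f x - f a| := by positivity
            linarith
        · intro x hx
          rw [hgval x, hx f hfW]
          simp
        · intro _
          rw [hgval y, ← ht, inv_mul_cancel₀ htpos.ne']
          simp
    choose g hgW hgbd hgea hgy using gsel
    haveI : Nonempty X := ⟨a⟩
    obtain ⟨e, he⟩ := exists_surjective_nat X
    let G : ℕ → Lp ℝ p μ := fun n => Nat.rec (g (e 0)) (fun k acc => acc ⊓ g (e (k + 1))) n
    have hGsucc : ∀ n, G (n + 1) = G n ⊓ g (e (n + 1)) := fun n => rfl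
    have hGprop : ∀ n, G n ∈ W ∧ (∀ x, 0 ≤ G n x ∧ G n x ≤ 1) ∧
        (∀ x ∈ Ea a, G n x = 1) ∧ (∀ i ≤ n, e i ∉ Ea a → G n (e i) = 0) := by
      intro n
      induction n with
      | zero =>
        refine ⟨hgW _, hgbd _, hgea _, ?_⟩
        intro i hi hie
        obtain rfl : i = 0 := Nat.le_zero.mp hi
        exact hgy _ hie
      | succ n ih =>
        obtain ⟨h1, h2, h3, h4⟩ := ih
        have hGs : ∀ x, G (n + 1) x = min (G n x) (g (e (n + 1)) x) := by
          intro x; rw [hGsucc n]; exact hinfAll _ _ x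
        refine ⟨?_, ?_, ?_, ?_⟩
        · rw [hGsucc n]; exact (hlat _ h1 _ (hgW _)).2
        · intro x
          rw [hGs x]
          exact ⟨le_min (h2 x).1 (hgbd _ x).1, (min_le_left _ _).trans (h2 x).2⟩
        · intro x hx
          rw [hGs x, h3 x hx, hgea _ x hx]
          simp
        · intro i hi hie
          rcases Nat.le_succ_iff.mp hi with hin | rfl
          · rw [hGs (e i), h4 i hin hie]
            exact min_eq_left (hgbd _ _).1
          · rw [hGs (e (n + 1)), hgy _ hie]
            exact min_eq_right (h2 _).1
    -- pointwise convergence to the indicator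
    have hGlim : ∀ x, Tendsto (fun n => G n x) atTop
        (nhds (Set.indicator (Ea a) (fun _ => (1 : ℝ)) x)) := by
      intro x
      by_cases hx : x ∈ Ea a
      · rw [Set.indicator_of_mem hx]
        have : ∀ n, G n x = 1 := fun n => (hGprop n).2.2.1 x hx
        simpa [this] using (tendsto_const_nhds : Tendsto (fun _ : ℕ => (1:ℝ)) atTop (nhds 1))
      · rw [Set.indicator_of_notMem hx]
        obtain ⟨m, rfl⟩ := he x
        have : ∀ n ≥ m, G n (e m) = 0 := fun n hn => (hGprop n).2.2.2 m hn hx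
        refine tendsto_const_nhds.congr' ?_
        filter_upwards [eventually_ge_atTop m] with n hn
        exact (this n hn).symm
    -- Lp convergence
    have hGtend : Tendsto G atTop (nhds χ) := by
      refine tendsto_Lp_of_dominated hp (memLp_const (1 : ℝ)) ?_ ?_
      · intro n
        filter_upwards with x
        have := (hGprop n).2.1 x
        rw [Real.norm_eq_abs, abs_le]
        exact ⟨by linarith [this.1], this.2⟩
      · filter_upwards [hχ] with x hx
        rw [hx]
        exact hGlim x
    exact hclosed.mem_of_tendsto hGtend (Filter.Eventually.of_forall fun n => (hGprop n).1)
  -- span is contained in W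
  have hspan_le : Submodule.span ℝ genset ≤ W := by
    rw [Submodule.span_le]
    rintro χ ⟨a, hχ⟩
    exact indicator_mem a χ hχ
  -- STEP B : every element of W lies in the closure of the span
  have hWsub : ∀ f ∈ W, f ∈ closure (Submodule.span ℝ genset : Set (Lp ℝ p μ)) := by
    intro f hfW
    rcases isEmpty_or_nonempty X with hempty | hne
    · have : f = (0 : Lp ℝ p μ) := by
        apply Lp.ext
        filter_upwards with x
        exact isEmptyElim x
      rw [this]
      exact subset_closure (Submodule.zero_mem _)
    · obtain ⟨e, he⟩ := exists_surjective_nat X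
      set χmk : X → Lp ℝ p μ :=
        fun b => indicatorConstLp p (hmeasS (Ea b)) (measure_ne_top μ _) (1 : ℝ) with hχmk
      have hχmk_mem : ∀ b, χmk b ∈ genset := fun b => ⟨b, indicatorConstLp_coeFn⟩
      set T : ℕ → Set X := fun n => ⋃ i ∈ Finset.range n, Ea (e i) with hT
      set S : ℕ → Finset ℕ :=
        fun n => (Finset.range n).filter (fun i => ∀ j < i, e j ∉ Ea (e i)) with hS
      have hFmemℒp : ∀ n, MemLp ((T n).indicator ⇑f) p μ :=
        fun n => (Lp.memLp f).indicator (hmeasS _)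
      set F : ℕ → Lp ℝ p μ := fun n => (hFmemℒp n).toLp _ with hF
      have hFcoe : ∀ n, ⇑(F n) =ᵐ[μ] (T n).indicator ⇑f := fun n => (hFmemℒp n).coeFn_toLp
      -- key pointwise identity
      have key : ∀ n x, (T n).indicator ⇑f x =
          ∑ i ∈ S n, f (e i) * (Ea (e i)).indicator (fun _ => (1 : ℝ)) x := by
        intro n x
        by_cases hx : x ∈ T n
        · have hex : ∃ i, i < n ∧ x ∈ Ea (e i) := by
            rw [hT] at hx
            simp only [Set.mem_iUnion, Finset.mem_range] at hx
            obtain ⟨i, hi, hxi⟩ := hx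
            exact ⟨i, hi, hxi⟩
          set i0 := Nat.find hex with hi0def
          obtain ⟨hi0n, hxi0⟩ := Nat.find_spec hex
          have hi0S : i0 ∈ S n := by
            rw [hS, Finset.mem_filter, Finset.mem_range]
            refine ⟨hi0n, fun j hj hmem => ?_⟩
            exact Nat.find_min hex hj ⟨hj.trans hi0n, (hEa_eq hmem) ▸ hxi0⟩
          rw [Set.indicator_of_mem hx]
          rw [Finset.sum_eq_single i0]
          · rw [Set.indicator_of_mem hxi0, mul_one]
            exact hxi0 f hfW
          · intro j hjS hji
            obtain ⟨hjr, hjnew⟩ := Finset.mem_filter.mp hjS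
            rw [Finset.mem_range] at hjr
            by_cases hxj : x ∈ Ea (e j)
            · exfalso
              rcases lt_or_gt_of_ne hji with hlt | hgt
              · exact Nat.find_min hex hlt ⟨hjr, hxj⟩
              · have h1 : Ea x = Ea (e j) := hEa_eq hxj
                have h2 : Ea x = Ea (e i0) := hEa_eq hxi0
                have : e i0 ∈ Ea (e j) := by
                  rw [← h1, h2]; exact hEa_self (e i0)
                exact hjnew i0 hgt this
            · rw [Set.indicator_of_notMem hxj, mul_zero]
          · intro hi0not
            exact absurd hi0S hi0not
        · rw [Set.indicator_of_notMem hx]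
          refine (Finset.sum_eq_zero fun j hjS => ?_).symm
          obtain ⟨hjr, -⟩ := Finset.mem_filter.mp hjS
          rw [Finset.mem_range] at hjr
          have hxj : x ∉ Ea (e j) := fun hxj => hx <| by
            rw [hT]
            exact Set.mem_iUnion₂.mpr ⟨j, Finset.mem_range.mpr hjr, hxj⟩
          rw [Set.indicator_of_notMem hxj, mul_zero]
      -- each F n is a finite linear combination of indicator functions
      have hFsum : ∀ n, F n = ∑ i ∈ S n, (f (e i)) • χmk (e i) := by
        intro n
        apply Lp.ext
        have hterm : ∀ᵐ x ∂μ, ∀ i ∈ S n,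
            ((f (e i)) • χmk (e i)) x = f (e i) * (Ea (e i)).indicator (fun _ => (1 : ℝ)) x := by
          rw [eventually_all_finset]
          intro i _
          filter_upwards [Lp.coeFn_smul (f (e i) : ℝ) (χmk (e i)),
            indicatorConstLp_coeFn (p := p) (hs := hmeasS (Ea (e i)))
              (hμs := measure_ne_top μ _) (c := (1 : ℝ))] with x e1 e2
          rw [e1, Pi.smul_apply, smul_eq_mul]
          simp only [hχmk]
          rw [e2]
        filter_upwards [hFcoe n, Lp_coeFn_finset_sum (S n) (fun i => (f (e i)) • χmk (e i)),
          hterm] with x h1 h2 h3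
        rw [h1, h2, key n x]
        exact (Finset.sum_congr rfl h3).symm
      have hFmemspan : ∀ n, F n ∈ (Submodule.span ℝ genset : Set (Lp ℝ p μ)) := by
        intro n
        rw [SetLike.mem_coe, hFsum n]
        exact Submodule.sum_mem _ fun i _ =>
          Submodule.smul_mem _ _ (Submodule.subset_span (hχmk_mem _))
      -- convergence F n → f
      have hconv : Tendsto F atTop (nhds f) := by
        refine tendsto_Lp_of_dominated hp (Lp.memLp f).norm ?_ ?_
        · intro n
          filter_upwards [hFcoe n] with x hx
          rw [hx]
          exact norm_indicator_le_norm_self _ x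
        · have hae : ∀ᵐ x ∂μ, ∀ n, F n x = (T n).indicator ⇑f x := ae_all_iff.mpr hFcoe
          filter_upwards [hae] with x hx
          obtain ⟨m, rfl⟩ := he x
          refine tendsto_const_nhds.congr' ?_
          filter_upwards [eventually_ge_atTop (m + 1)] with n hn
          rw [hx n, Set.indicator_of_mem]
          rw [hT]
          exact Set.mem_iUnion₂.mpr ⟨m, Finset.mem_range.mpr
            (lt_of_lt_of_le (Nat.lt_succ_self m) hn), hEa_self (e m)⟩
      exact mem_closure_of_tendsto hconv (Filter.Eventually.of_forall hFmemspan)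
  -- conclusion
  ext u
  constructor
  · intro hu
    exact hWsub u hu
  · intro hu
    exact closure_minimal (fun v hv => hspan_le hv) hclosed hu
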